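/- Let B = [[b, c],[c, -b]] with b, c ∈ Sym_n(ℝ), and let G(s) = exp(sB). Write G(s) = N(s)A(s)N(s)ᵀ with N(s) = [[I_n,0],[n₁(s),I_n]], n₁(s) symmetric, A(s) = diag(h(s), h(s)⁻¹), h(s) symmetric positive definite (block-Gauss decomposition). Then h(s) satisfies the equation (h'(s)h(s)⁻¹)' = (c·h(s)⁻¹)². -/

import Mathlib

open Matrix

/-- Entrywise derivative of a matrix-valued function of a real variable. -/
noncomputable def matDeriv {m n : Type*} (f : ℝ → Matrix m n ℝ) (s : ℝ) : Matrix m n ℝ :=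
  Matrix.of fun i j => deriv (fun t => f t i j) s

/-- for `B = [[b,c],[c,-b]]` with `b, c` symmetric and `G(s) = exp(sB)`
with block-Gauss decomposition `G = N A Nᵀ`, `N = [[I,0],[n₁,I]]` (`n₁` symmetric),
`A = diag(h, h⁻¹)` (`h` symmetric positive definite), the upper-left block `h(s)`
satisfies `(h'h⁻¹)' = (c h⁻¹)²`. -/
theorem stmt19 (n : ℕ)
    (b c : Matrix (Fin n) (Fin n) ℝ) (hb : bᵀ = b) (hc : cᵀ = c)
    (B : Matrix (Fin n ⊕ Fin n) (Fin n ⊕ Fin n) ℝ)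
    (hB : B = Matrix.fromBlocks b c c (-b))
    (h n₁ : ℝ → Matrix (Fin n) (Fin n) ℝ)
    (hpos : ∀ s, (h s).PosDef) (hsymm : ∀ s, (h s)ᵀ = h s)
    (n₁symm : ∀ s, (n₁ s)ᵀ = n₁ s)
    (hdecomp : ∀ s, NormedSpace.exp (s • B) =
      Matrix.fromBlocks 1 0 (n₁ s) 1 * Matrix.fromBlocks (h s) 0 0 (h s)⁻¹ *
        (Matrix.fromBlocks 1 0 (n₁ s) 1)ᵀ)
    (s : ℝ) :
    matDeriv (fun t => matDeriv h t * (h t)⁻¹) s = (c * (h s)⁻¹) ^ 2 := by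
  letI : NormedRing (Matrix (Fin n) (Fin n) ℝ) := Matrix.linftyOpNormedRing
  letI : NormedAlgebra ℝ (Matrix (Fin n) (Fin n) ℝ) := Matrix.linftyOpNormedAlgebra
  letI : NormedRing (Matrix (Fin n ⊕ Fin n) (Fin n ⊕ Fin n) ℝ) := Matrix.linftyOpNormedRing
  letI : NormedAlgebra ℝ (Matrix (Fin n ⊕ Fin n) (Fin n ⊕ Fin n) ℝ) := Matrix.linftyOpNormedAlgebra
  -- determinant units
  have hdet : ∀ t, IsUnit (h t).det := fun t => (hpos t).det_pos.ne'.isUnit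
  -- helper: matDeriv from HasDerivAt
  have matDeriv_eq : ∀ {f : ℝ → Matrix (Fin n) (Fin n) ℝ} {f' : Matrix (Fin n) (Fin n) ℝ}
      {t : ℝ}, HasDerivAt f f' t → matDeriv f t = f' := by
    intro f f' t hf
    funext i j
    let L : Matrix (Fin n) (Fin n) ℝ →L[ℝ] ℝ :=
      LinearMap.toContinuousLinearMap
        { toFun := fun A => A i j, map_add' := fun _ _ => rfl, map_smul' := fun _ _ => rfl }
    have hL : HasDerivAt (fun u => f u i j) (f' i j) t :=
      L.hasFDerivAt.comp_hasDerivAt t hf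
    exact hL.deriv
  -- the exponential and its derivative
  have hG : ∀ t, HasDerivAt (fun u : ℝ => NormedSpace.exp (u • B))
      (B * NormedSpace.exp (t • B)) t := fun t => hasDerivAt_exp_smul_const' B t
  -- block form of the exponential
  have hGt : ∀ t, NormedSpace.exp (t • B) =
      Matrix.fromBlocks (h t) (h t * n₁ t) (n₁ t * h t) (n₁ t * h t * n₁ t + (h t)⁻¹) := by
    intro t
    have hprod : Matrix.fromBlocks 1 0 (n₁ t) 1 * Matrix.fromBlocks (h t) 0 0 (h t)⁻¹ *
        (Matrix.fromBlocks 1 0 (n₁ t) 1)ᵀ =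
        Matrix.fromBlocks (h t) (h t * n₁ t) (n₁ t * h t) (n₁ t * h t * n₁ t + (h t)⁻¹) := by
      rw [Matrix.fromBlocks_transpose]
      simp [Matrix.fromBlocks_multiply, n₁symm t, Matrix.mul_assoc]
    exact (hdecomp t).trans hprod
  -- block form of B * G t
  have hBGt : ∀ t, B * NormedSpace.exp (t • B) =
      Matrix.fromBlocks (b * h t + c * (n₁ t * h t))
        (b * (h t * n₁ t) + c * (n₁ t * h t * n₁ t + (h t)⁻¹))
        (c * h t + -b * (n₁ t * h t))
        (c * (h t * n₁ t) + -b * (n₁ t * h t * n₁ t + (h t)⁻¹)) := by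
    intro t
    rw [hGt t, hB, Matrix.fromBlocks_multiply]
  -- linear maps extracting blocks
  let L11 : Matrix (Fin n ⊕ Fin n) (Fin n ⊕ Fin n) ℝ →L[ℝ] Matrix (Fin n) (Fin n) ℝ :=
    LinearMap.toContinuousLinearMap
      { toFun := Matrix.toBlocks₁₁, map_add' := fun _ _ => rfl, map_smul' := fun _ _ => rfl }
  let L12 : Matrix (Fin n ⊕ Fin n) (Fin n ⊕ Fin n) ℝ →L[ℝ] Matrix (Fin n) (Fin n) ℝ :=
    LinearMap.toContinuousLinearMap
      { toFun := Matrix.toBlocks₁₂, map_add' := fun _ _ => rfl, map_smul' := fun _ _ => rfl }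
  -- derivative of h
  have hh : ∀ t, HasDerivAt h (b * h t + c * (n₁ t * h t)) t := by
    intro t
    have := L11.hasFDerivAt.comp_hasDerivAt t (hG t)
    have h1 : (fun u => L11 (NormedSpace.exp (u • B))) = h := by
      funext u
      show (NormedSpace.exp (u • B)).toBlocks₁₁ = h u
      rw [hGt u, Matrix.toBlocks_fromBlocks₁₁]
    have h2 : L11 (B * NormedSpace.exp (t • B)) = b * h t + c * (n₁ t * h t) := by
      show (B * NormedSpace.exp (t • B)).toBlocks₁₁ = _
      rw [hBGt t, Matrix.toBlocks_fromBlocks₁₁]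
    simp only [Function.comp_def] at this
    rw [h1] at this
    exact this.congr_deriv h2
  -- derivative of h * n₁
  have hhn : ∀ t, HasDerivAt (fun u => h u * n₁ u)
      (b * (h t * n₁ t) + c * (n₁ t * h t * n₁ t + (h t)⁻¹)) t := by
    intro t
    have := L12.hasFDerivAt.comp_hasDerivAt t (hG t)
    have h1 : (fun u => L12 (NormedSpace.exp (u • B))) = fun u => h u * n₁ u := by
      funext u
      show (NormedSpace.exp (u • B)).toBlocks₁₂ = h u * n₁ u
      rw [hGt u, Matrix.toBlocks_fromBlocks₁₂]
    have h2 : L12 (B * NormedSpace.exp (t • B)) =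
        b * (h t * n₁ t) + c * (n₁ t * h t * n₁ t + (h t)⁻¹) := by
      show (B * NormedSpace.exp (t • B)).toBlocks₁₂ = _
      rw [hBGt t, Matrix.toBlocks_fromBlocks₁₂]
    simp only [Function.comp_def] at this
    rw [h1] at this
    exact this.congr_deriv h2
  -- derivative of h⁻¹
  have hinv : ∀ t, HasDerivAt (fun u => (h u)⁻¹)
      (-((h t)⁻¹ * (b * h t + c * (n₁ t * h t)) * (h t)⁻¹)) t := by
    intro t
    have hu := (hpos t).isUnit
    have hF := hasFDerivAt_ringInverse (𝕜 := ℝ) hu.unit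
    rw [hu.unit_spec] at hF
    have := hF.comp_hasDerivAt t (hh t)
    simp only [ContinuousLinearMap.neg_apply, ContinuousLinearMap.mulLeftRight_apply] at this
    have h1 : (fun u => Ring.inverse (h u)) = fun u => (h u)⁻¹ := by
      funext u; rw [Matrix.nonsing_inv_eq_ringInverse]
    have h2 : ((hu.unit⁻¹ : _) : Matrix (Fin n) (Fin n) ℝ) = (h t)⁻¹ := by
      rw [← Ring.inverse_unit, hu.unit_spec, ← Matrix.nonsing_inv_eq_ringInverse]
    simp only [Function.comp_def] at this
    rw [h1, h2] at this
    exact this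
  -- derivative of n₁
  have hn1 : ∀ t, HasDerivAt n₁ ((h t)⁻¹ * c * (h t)⁻¹) t := by
    intro t
    have hp := (hinv t).mul (hhn t)
    have hn1eq : (fun u => (h u)⁻¹ * (h u * n₁ u)) = n₁ :=
      funext fun u => Matrix.nonsing_inv_mul_cancel_left _ _ (hdet u)
    change HasDerivAt (fun u => (h u)⁻¹ * (h u * n₁ u)) _ t at hp
    rw [hn1eq] at hp
    convert hp using 1
    have hzw : ∀ w : Matrix (Fin n) (Fin n) ℝ, (h t)⁻¹ * (h t * w) = w :=
      fun w => Matrix.nonsing_inv_mul_cancel_left _ _ (hdet t)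
    have hwz : ∀ w : Matrix (Fin n) (Fin n) ℝ, h t * ((h t)⁻¹ * w) = w :=
      fun w => Matrix.mul_nonsing_inv_cancel_left _ _ (hdet t)
    simp only [Matrix.mul_add, Matrix.add_mul, neg_mul, Matrix.mul_assoc, hzw, hwz,
      mul_add, add_mul]
    abel
  -- rewrite the inner function
  have hfun : (fun t => matDeriv h t * (h t)⁻¹) = fun t => b + c * n₁ t := by
    funext t
    rw [matDeriv_eq (hh t), Matrix.add_mul, Matrix.mul_nonsing_inv_cancel_right _ _ (hdet t),
      ← Matrix.mul_assoc c (n₁ t) (h t), Matrix.mul_nonsing_inv_cancel_right _ _ (hdet t)]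
  rw [hfun]
  have hfin : HasDerivAt (fun t => b + c * n₁ t) (c * ((h s)⁻¹ * c * (h s)⁻¹)) s := by
    exact ((hasDerivAt_const s b).add ((hn1 s).const_mul c)).congr_deriv (zero_add _)
  rw [matDeriv_eq hfin, sq]
  simp only [Matrix.mul_assoc]
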